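/- For every integer m that is divisible by none of the primes p_1, p_2, ..., p_r, there exist t ∈ ℤ and integers h_2, ..., h_r with 1 ≤ h_j ≤ p_j − 1 such that m = N(t, h_2, ..., h_r). -/

import Mathlib

/-- `nthPrime i` is the i-th prime number with 1-based indexing:
`nthPrime 1 = 2`, `nthPrime 2 = 3`, `nthPrime 3 = 5`, ... -/
noncomputable def nthPrime (i : ℕ) : ℕ := Nat.nth Nat.Prime (i - 1)

/-- The linear expression `N(t, h_2, ..., h_r)` from the paper (formula (21)). -/
noncomputable def NVal (r : ℕ) (a b : ℕ → ℤ) (t : ℤ) (h : ℕ → ℤ) : ℤ :=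
  t * ∏ l ∈ Finset.Icc 1 r, (nthPrime l : ℤ)
    + (h r - 1) * b r * ∏ l ∈ Finset.Icc 1 (r - 1), (nthPrime l : ℤ)
    + ∑ j ∈ Finset.Icc 2 (r - 1),
        (h j - 1) * b j * (∏ l ∈ Finset.Icc 1 (j - 1), (nthPrime l : ℤ))
          * (∏ q ∈ Finset.Icc (j + 1) r, (nthPrime q : ℤ) * a q)
    - 1

lemma nthPrime_prime (i : ℕ) : (nthPrime i).Prime := Nat.prime_nth_prime _

noncomputable def Pp (k : ℕ) : ℤ := ∏ l ∈ Finset.Icc 1 k, (nthPrime l : ℤ)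

noncomputable def Qq (r : ℕ) (a : ℕ → ℤ) (j : ℕ) : ℤ :=
  ∏ q ∈ Finset.Icc (j + 1) r, ((nthPrime q : ℤ) * a q)

noncomputable def Tt (r : ℕ) (a b : ℕ → ℤ) (h : ℕ → ℤ) (j : ℕ) : ℤ :=
  (h j - 1) * b j * Pp (j - 1) * Qq r a j

lemma NVal_eq (r : ℕ) (a b : ℕ → ℤ) (t : ℤ) (h : ℕ → ℤ) :
    NVal r a b t h = t * Pp r + (h r - 1) * b r * Pp (r - 1)
      + (∑ j ∈ Finset.Icc 2 (r - 1), Tt r a b h j) - 1 := by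
  simp only [NVal, Pp, Qq, Tt]

lemma dvd_Pp {i k : ℕ} (h1 : 1 ≤ i) (h2 : i ≤ k) : (nthPrime i : ℤ) ∣ Pp k :=
  Finset.dvd_prod_of_mem _ (Finset.mem_Icc.mpr ⟨h1, h2⟩)

lemma dvd_Qq {r i j : ℕ} (a : ℕ → ℤ) (h1 : j + 1 ≤ i) (h2 : i ≤ r) :
    (nthPrime i : ℤ) ∣ Qq r a j :=
  dvd_trans (dvd_mul_right _ (a i))
    (Finset.dvd_prod_of_mem _ (Finset.mem_Icc.mpr ⟨h1, h2⟩))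

lemma dvd_prod_sub_one {s : Finset ℕ} {f : ℕ → ℤ} {c : ℤ}
    (h : ∀ x ∈ s, c ∣ f x - 1) : c ∣ (∏ x ∈ s, f x) - 1 := by
  classical
  induction s using Finset.induction_on with
  | empty => simp
  | insert _ _ hx ih =>
    rename_i x s
    rw [Finset.prod_insert hx]
    have h1 : c ∣ f x - 1 := h x (Finset.mem_insert_self x s)
    have h2 : c ∣ (∏ y ∈ s, f y) - 1 := ih fun y hy => h y (Finset.mem_insert_of_mem hy)
    have e : f x * ∏ y ∈ s, f y - 1
        = (f x - 1) * ∏ y ∈ s, f y + ((∏ y ∈ s, f y) - 1) := by ring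
    rw [e]
    exact dvd_add (h1.mul_right _) h2

theorem exists_NVal_rep (r : ℕ) (hr : 3 ≤ r) (a b : ℕ → ℤ)
    (hab : ∀ i, 2 ≤ i → i ≤ r →
      (nthPrime i : ℤ) * a i - b i * ∏ l ∈ Finset.Icc 1 (i - 1), (nthPrime l : ℤ) = 1)
    (m : ℤ) (hm : ∀ i, 1 ≤ i → i ≤ r → ¬ ((nthPrime i : ℤ) ∣ m)) :
    ∃ t : ℤ, ∃ h : ℕ → ℤ,
      (∀ j, 2 ≤ j → j ≤ r → 1 ≤ h j ∧ h j ≤ (nthPrime j : ℤ) - 1) ∧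
      m = NVal r a b t h := by
  classical
  have hPab : ∀ i, 2 ≤ i → i ≤ r → (nthPrime i : ℤ) * a i - b i * Pp (i - 1) = 1 := hab
  have hp1 : (nthPrime 1 : ℤ) = 2 := by
    simp [nthPrime, Nat.nth_prime_zero_eq_two]
  have hppos : ∀ i, (0 : ℤ) < (nthPrime i : ℤ) := fun i => by
    exact_mod_cast (nthPrime_prime i).pos
  set h : ℕ → ℤ := fun j => (-m) % ((nthPrime j : ℤ)) with hdef
  have hbound : ∀ j, 2 ≤ j → j ≤ r → 1 ≤ h j ∧ h j ≤ (nthPrime j : ℤ) - 1 := by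
    intro j h2 hjr
    have hnd : ¬ ((nthPrime j : ℤ) ∣ m) := hm j (by omega) hjr
    have h0 : 0 ≤ h j := Int.emod_nonneg _ (ne_of_gt (hppos j))
    have h1 : h j < (nthPrime j : ℤ) := Int.emod_lt_of_pos _ (hppos j)
    have hne : h j ≠ 0 := by
      intro h0'
      exact hnd (dvd_neg.mp (Int.dvd_of_emod_eq_zero h0'))
    constructor <;> omega
  have hcong : ∀ j, (nthPrime j : ℤ) ∣ m + h j := by
    intro j
    have e := Int.emod_add_mul_ediv (-m) ((nthPrime j : ℤ))
    exact ⟨-((-m) / (nthPrime j : ℤ)), by linear_combination e⟩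
  -- divisibility of m - NVal r a b 0 h by each prime
  have hDdvd : ∀ i ∈ Finset.Icc 1 r, (nthPrime i : ℤ) ∣ m - NVal r a b 0 h := by
    intro i hi
    rw [Finset.mem_Icc] at hi
    rw [NVal_eq]
    by_cases hi1 : i = 1
    · -- i = 1 : everything except -1 is even, and m is odd
      subst hi1
      rw [hp1]
      have e1 : (2 : ℤ) ∣ Pp (r - 1) := by
        have := dvd_Pp (i := 1) (k := r - 1) le_rfl (by omega)
        rwa [hp1] at this
      have e2 : (2 : ℤ) ∣ ∑ j ∈ Finset.Icc 2 (r - 1), Tt r a b h j := by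
        refine Finset.dvd_sum fun j hj => ?_
        rw [Finset.mem_Icc] at hj
        have : (2 : ℤ) ∣ Pp (j - 1) := by
          have := dvd_Pp (i := 1) (k := j - 1) le_rfl (by omega)
          rwa [hp1] at this
        exact (this.mul_left ((h j - 1) * b j)).mul_right _
      have e3 : (2 : ℤ) ∣ m + 1 := by
        have hmd : ¬ ((2 : ℤ) ∣ m) := by rw [← hp1]; exact hm 1 le_rfl (by omega)
        omega
      have e : m - (0 * Pp r + (h r - 1) * b r * Pp (r - 1)
            + (∑ j ∈ Finset.Icc 2 (r - 1), Tt r a b h j) - 1)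
          = (m + 1) - ((h r - 1) * b r) * Pp (r - 1)
            - (∑ j ∈ Finset.Icc 2 (r - 1), Tt r a b h j) := by ring
      rw [e]
      exact dvd_sub (dvd_sub e3 (e1.mul_left _)) e2
    · by_cases hir : i = r
      · -- i = r
        have eS : (nthPrime i : ℤ) ∣ ∑ j ∈ Finset.Icc 2 (r - 1), Tt r a b h j := by
          refine Finset.dvd_sum fun j hj => ?_
          rw [Finset.mem_Icc] at hj
          exact (dvd_Qq a (by omega) (by omega)).mul_left _
        have e : m - (0 * Pp r + (h r - 1) * b r * Pp (r - 1)
              + (∑ j ∈ Finset.Icc 2 (r - 1), Tt r a b h j) - 1)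
            = (m + h i) - ((h r - 1) * ((nthPrime r : ℤ) * a r)
              + (∑ j ∈ Finset.Icc 2 (r - 1), Tt r a b h j)) := by
          rw [hir]
          linear_combination (h r - 1) * hPab r (by omega) le_rfl
        rw [e]
        exact dvd_sub (hcong i) (dvd_add (by rw [hir]; exact (dvd_mul_right _ _).mul_left _) eS)
      · -- 2 ≤ i ≤ r - 1
        have hi2 : 2 ≤ i := by omega
        have hir1 : i ≤ r - 1 := by omega
        have hmem : i ∈ Finset.Icc 2 (r - 1) := Finset.mem_Icc.mpr ⟨hi2, hir1⟩
        rw [← Finset.add_sum_erase _ _ hmem]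
        have eA : (nthPrime i : ℤ) ∣ Pp (r - 1) := dvd_Pp (by omega) hir1
        have eS' : (nthPrime i : ℤ) ∣ ∑ j ∈ (Finset.Icc 2 (r - 1)).erase i, Tt r a b h j := by
          refine Finset.dvd_sum fun j hj => ?_
          rw [Finset.mem_erase, Finset.mem_Icc] at hj
          rcases lt_or_gt_of_ne hj.1 with hji | hji
          · -- j < i
            exact (dvd_Qq a (by omega) hi.2).mul_left _
          · -- i < j
            exact ((dvd_Pp (by omega) (by omega)).mul_left _).mul_right _
        have eQ : (nthPrime i : ℤ) ∣ Qq r a i - 1 := by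
          refine dvd_prod_sub_one fun q hq => ?_
          rw [Finset.mem_Icc] at hq
          have e1 := hPab q (by omega) hq.2
          have e2 : (nthPrime i : ℤ) ∣ Pp (q - 1) := dvd_Pp (by omega) (by omega)
          have e : (nthPrime q : ℤ) * a q - 1 = b q * Pp (q - 1) := by linarith
          rw [e]
          exact e2.mul_left _
        have e : m - (0 * Pp r + (h r - 1) * b r * Pp (r - 1)
              + (Tt r a b h i + ∑ j ∈ (Finset.Icc 2 (r - 1)).erase i, Tt r a b h j) - 1)
            = (m + h i) - ((h r - 1) * b r) * Pp (r - 1)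
              - (∑ j ∈ (Finset.Icc 2 (r - 1)).erase i, Tt r a b h j)
              - (h i - 1) * (((nthPrime i : ℤ) * a i) * Qq r a i)
              + (h i - 1) * (Qq r a i - 1) := by
          simp only [Tt]
          linear_combination (h i - 1) * Qq r a i * hPab i hi2 hi.2
        rw [e]
        exact dvd_add
          (dvd_sub (dvd_sub (dvd_sub (hcong i) (eA.mul_left _)) eS')
            (((dvd_mul_right _ (a i)).mul_right _).mul_left _))
          (eQ.mul_left _)
  -- pairwise coprimality and the final assembly
  have hpair : (↑(Finset.Icc 1 r) : Set ℕ).Pairwise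
      (Function.onFun IsCoprime fun i => (nthPrime i : ℤ)) := by
    intro i hi j hj hij
    simp only [Finset.coe_Icc, Set.mem_Icc] at hi hj
    have hne : nthPrime i ≠ nthPrime j := by
      intro hEq
      have := Nat.nth_injective Nat.infinite_setOf_prime hEq
      omega
    have : Nat.Coprime (nthPrime i) (nthPrime j) :=
      (Nat.coprime_primes (nthPrime_prime i) (nthPrime_prime j)).mpr hne
    exact Nat.isCoprime_iff_coprime.mpr this
  have hPr : Pp r ∣ m - NVal r a b 0 h :=
    Finset.prod_dvd_of_coprime hpair hDdvd
  refine ⟨(m - NVal r a b 0 h) / Pp r, h, hbound, ?_⟩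
  have hNt : NVal r a b ((m - NVal r a b 0 h) / Pp r) h
      = ((m - NVal r a b 0 h) / Pp r) * Pp r + NVal r a b 0 h := by
    rw [NVal_eq, NVal_eq]; ring
  rw [hNt, Int.ediv_mul_cancel hPr]
  ring
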